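/- Let k, k' ∈ A_c(Y) with symbols ℓ = π_c(k) and ℓ' = π_c(k'). Then τ₀^r(k ∘ k' − k' ∘ k) = σ₁(ℓ, ℓ'). Equivalently, the pair (τ₀^r, σ₁) is a relative 0-cocycle for the symbol homomorphism π_c : A_c(Y) → B_c(Y): the Hochschild coboundary b τ₀^r equals the pullback of σ₁ by π_c. -/

import Mathlib

open MeasureTheory Filter

noncomputable section

def chi (l : ℝ) (s : ℝ) : ℂ := if s ≤ -l then 1 else 0

def MemBc {Y : Type*} [TopologicalSpace Y] (ℓ : Y → Y → ℝ → ℂ) : Prop :=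
  Continuous (fun q : Y × Y × ℝ => ℓ q.1 q.2.1 q.2.2) ∧
    ∃ R > (0 : ℝ), ∀ y y' t, t ∉ Set.Icc (-R) R → ℓ y y' t = 0

def conv {Y : Type*} [MeasurableSpace Y] (μ : Measure Y)
    (ℓ ℓ' : Y → Y → ℝ → ℂ) : Y → Y → ℝ → ℂ :=
  fun y y'' u => ∫ q : Y × ℝ, ℓ y q.1 q.2 * ℓ' q.1 y'' (u - q.2) ∂(μ.prod volume)

def sigma1 {Y : Type*} [MeasurableSpace Y] (μ : Measure Y)
    (ℓ₀ ℓ₁ : Y → Y → ℝ → ℂ) : ℂ :=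
  ∫ q : (Y × Y) × ℝ × ℝ,
    ℓ₀ q.1.1 q.1.2 (q.2.1 - q.2.2) * ℓ₁ q.1.2 q.1.1 (q.2.2 - q.2.1) *
      (chi 0 q.2.2 - chi 0 q.2.1) ∂((μ.prod μ).prod (volume.prod volume))

def MemAc {Y : Type*} [TopologicalSpace Y] (k : Y × ℝ → Y × ℝ → ℂ)
    (ℓ : Y → Y → ℝ → ℂ) : Prop :=
  Continuous (fun q : (Y × ℝ) × (Y × ℝ) => k q.1 q.2) ∧
    ∃ l > (0 : ℝ),
      (∀ y s y' s', s ≤ -l → s' ≤ -l → k (y, s) (y', s') = ℓ y y' (s - s')) ∧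
      HasCompactSupport (fun q : (Y × ℝ) × (Y × ℝ) =>
        if q.1.2 ≤ -l ∧ q.2.2 ≤ -l then 0 else k q.1 q.2)

def kcomp {Y : Type*} [MeasurableSpace Y] (μ : Measure Y)
    (k k' : Y × ℝ → Y × ℝ → ℂ) : Y × ℝ → Y × ℝ → ℂ :=
  fun p q => ∫ r : Y × ℝ, k p r * k' r q ∂(μ.prod volume)

def phiReg {Y : Type*} [MeasurableSpace Y] (μ : Measure Y)
    (k : Y × ℝ → Y × ℝ → ℂ) (ℓ : Y → Y → ℝ → ℂ) (l : ℝ) : ℂ :=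
  (∫ p : Y × ℝ, (if -l ≤ p.2 then k p p else 0) ∂(μ.prod volume)) -
    (l : ℂ) * ∫ y, ℓ y y 0 ∂μ

section Aux

variable {α β γ δ : Type*} [MeasurableSpace α] [MeasurableSpace β] [MeasurableSpace γ]
  [MeasurableSpace δ]

lemma integrable_of_bdd_support {ν : Measure α} {f : α → ℂ} {s : Set α}
    (hm : AEStronglyMeasurable f ν) (hs : MeasurableSet s) (hνs : ν s < ⊤)
    {C : ℝ} (hb : ∀ x, ‖f x‖ ≤ C) (h0 : ∀ x ∉ s, f x = 0) : Integrable f ν := by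
  have hf : f = s.indicator f := by
    funext x
    by_cases hx : x ∈ s
    · simp [Set.indicator, hx]
    · simp [Set.indicator, hx, h0 x hx]
  rw [hf, integrable_indicator_iff hs]
  exact Integrable.mono' (integrableOn_const hνs.ne) hm.restrict
    (Eventually.of_forall hb)

def prodProdProdCommME : (α × β) × γ × δ ≃ᵐ (α × γ) × β × δ :=
  MeasurableEquiv.prodAssoc.trans
    (((MeasurableEquiv.refl α).prodCongr
      (MeasurableEquiv.prodAssoc.symm.trans
        ((MeasurableEquiv.prodComm.prodCongr (MeasurableEquiv.refl δ)).trans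
          MeasurableEquiv.prodAssoc))).trans
      MeasurableEquiv.prodAssoc.symm)

lemma prodProdProdCommME_apply (q : (α × β) × γ × δ) :
    prodProdProdCommME q = ((q.1.1, q.2.1), (q.1.2, q.2.2)) := rfl

lemma measurePreserving_prodProdProdCommME
    (μa : Measure α) (μb : Measure β) (μc : Measure γ) (μd : Measure δ)
    [SFinite μa] [SFinite μb] [SFinite μc] [SFinite μd] :
    MeasurePreserving (prodProdProdCommME (α := α) (β := β) (γ := γ) (δ := δ))
      ((μa.prod μb).prod (μc.prod μd)) ((μa.prod μc).prod (μb.prod μd)) := by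
  have hT : MeasurePreserving
      (MeasurableEquiv.prodAssoc.symm.trans
        ((MeasurableEquiv.prodComm.prodCongr (MeasurableEquiv.refl δ)).trans
          MeasurableEquiv.prodAssoc) : β × γ × δ ≃ᵐ γ × β × δ)
      (μb.prod (μc.prod μd)) (μc.prod (μb.prod μd)) :=
    (measurePreserving_prodAssoc μc μb μd).comp
      ((Measure.measurePreserving_swap.prod (MeasurePreserving.id μd)).comp
        ((measurePreserving_prodAssoc μb μc μd).symm MeasurableEquiv.prodAssoc))
  exact ((measurePreserving_prodAssoc μa μc (μb.prod μd)).symm MeasurableEquiv.prodAssoc).comp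
    (((MeasurePreserving.id μa).prod hT).comp (measurePreserving_prodAssoc μa μb (μc.prod μd)))

lemma chi_shift (L x : ℝ) : chi L (x - L) = chi 0 x := by
  simp only [chi, sub_le_iff_le_add, neg_add_cancel, neg_zero]

end Aux

set_option maxHeartbeats 2000000 in
/-- `τ₀^r(k ∘ k' − k' ∘ k) = σ₁(ℓ, ℓ')`, i.e. the truncated trace of
the commutator `k ∘ k' − k' ∘ k` (whose symbol is `ℓ ⋆ ℓ' − ℓ' ⋆ ℓ`) converges, as
`λ → +∞`, to `σ₁(ℓ, ℓ')`.  Thus `(τ₀^r, σ₁)` is a relative 0-cocycle for the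
symbol homomorphism `π_c : A_c(Y) → B_c(Y)`. -/
theorem regularized_trace_of_commutator_eq_sigma1
    {Y : Type*} [MetricSpace Y] [CompactSpace Y] [MeasurableSpace Y] [BorelSpace Y]
    (μ : Measure Y) [IsFiniteMeasure μ]
    (k k' : Y × ℝ → Y × ℝ → ℂ) (ℓ ℓ' : Y → Y → ℝ → ℂ)
    (hℓ : MemBc ℓ) (hℓ' : MemBc ℓ')
    (hk : MemAc k ℓ) (hk' : MemAc k' ℓ') :
    Tendsto (fun l =>
        phiReg μ (fun p q => kcomp μ k k' p q - kcomp μ k' k p q)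
          (fun y y' u => conv μ ℓ ℓ' y y' u - conv μ ℓ' ℓ y y' u) l)
      atTop (nhds (sigma1 μ ℓ ℓ')) := by
  obtain ⟨hℓc, R₀, hR₀, hℓ0⟩ := hℓ
  obtain ⟨hℓ'c, R₁, hR₁, hℓ'0⟩ := hℓ'
  obtain ⟨hkc, l₀, hl₀, hks, hkg⟩ := hk
  obtain ⟨hk'c, l₁, hl₁, hk's, hk'g⟩ := hk'
  have habs : ∀ x B : ℝ, x ∉ Set.Icc (-B) B ↔ B < |x| := by
    intro x B
    rw [Set.mem_Icc, ← abs_le, not_le]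
  -- symbol support
  set R : ℝ := max R₀ R₁ with hRdef
  have hRpos : 0 < R := lt_of_lt_of_le hR₀ (le_max_left _ _)
  have hℓz : ∀ y y' t, R < |t| → ℓ y y' t = 0 := by
    intro y y' t ht
    refine hℓ0 y y' t ?_
    rw [habs]
    exact lt_of_le_of_lt (le_max_left _ _) ht
  have hℓ'z : ∀ y y' t, R < |t| → ℓ' y y' t = 0 := by
    intro y y' t ht
    refine hℓ'0 y y' t ?_
    rw [habs]
    exact lt_of_le_of_lt (le_max_right _ _) ht
  -- the compactly supported corrections vanish for large time variables
  obtain ⟨M, hM0, hgz, hg'z⟩ :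
      ∃ M : ℝ, 0 ≤ M ∧
        (∀ p r : Y × ℝ, ¬(p.2 ≤ -l₀ ∧ r.2 ≤ -l₀) → M < max |p.2| |r.2| → k p r = 0) ∧
        (∀ p r : Y × ℝ, ¬(p.2 ≤ -l₁ ∧ r.2 ≤ -l₁) → M < max |p.2| |r.2| → k' p r = 0) := by
    have hπ : Continuous fun q : (Y × ℝ) × (Y × ℝ) => max |q.1.2| |q.2.2| :=
      (continuous_fst.snd.abs).max (continuous_snd.snd.abs)
    obtain ⟨M₁, hM₁⟩ := (hkg.image hπ).bddAbove
    obtain ⟨M₂, hM₂⟩ := (hk'g.image hπ).bddAbove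
    refine ⟨max 0 (max M₁ M₂), le_max_left _ _, ?_, ?_⟩
    · intro p r hcond hlt
      by_contra hne
      have hmem : (p, r) ∈ tsupport
          (fun q : (Y × ℝ) × (Y × ℝ) => if q.1.2 ≤ -l₀ ∧ q.2.2 ≤ -l₀ then 0 else k q.1 q.2) := by
        apply subset_tsupport
        simp only [Function.mem_support, if_neg hcond]
        exact hne
      have h1 : max |p.2| |r.2| ≤ M₁ := hM₁ (Set.mem_image_of_mem _ hmem)
      have h2 : max |p.2| |r.2| ≤ max 0 (max M₁ M₂) :=
        le_trans h1 (le_trans (le_max_left _ _) (le_max_right _ _))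
      exact absurd hlt (not_lt.2 h2)
    · intro p r hcond hlt
      by_contra hne
      have hmem : (p, r) ∈ tsupport
          (fun q : (Y × ℝ) × (Y × ℝ) => if q.1.2 ≤ -l₁ ∧ q.2.2 ≤ -l₁ then 0 else k' q.1 q.2) := by
        apply subset_tsupport
        simp only [Function.mem_support, if_neg hcond]
        exact hne
      have h1 : max |p.2| |r.2| ≤ M₂ := hM₂ (Set.mem_image_of_mem _ hmem)
      have h2 : max |p.2| |r.2| ≤ max 0 (max M₁ M₂) :=
        le_trans h1 (le_trans (le_max_right _ _) (le_max_right _ _))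
      exact absurd hlt (not_lt.2 h2)
  -- bounds
  obtain ⟨Cℓ, hCℓ0, hCℓ, hCℓ'⟩ :
      ∃ C : ℝ, 0 ≤ C ∧ (∀ y y' t, ‖ℓ y y' t‖ ≤ C) ∧ (∀ y y' t, ‖ℓ' y y' t‖ ≤ C) := by
    have hcsℓ : HasCompactSupport (fun q : Y × Y × ℝ => ℓ q.1 q.2.1 q.2.2) := by
      refine HasCompactSupport.intro
        (isCompact_univ.prod (isCompact_univ.prod (isCompact_Icc (a := -R₀) (b := R₀)))) ?_
      intro q hq
      refine hℓ0 _ _ _ ?_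
      simpa [Set.mem_prod] using hq
    have hcsℓ' : HasCompactSupport (fun q : Y × Y × ℝ => ℓ' q.1 q.2.1 q.2.2) := by
      refine HasCompactSupport.intro
        (isCompact_univ.prod (isCompact_univ.prod (isCompact_Icc (a := -R₁) (b := R₁)))) ?_
      intro q hq
      refine hℓ'0 _ _ _ ?_
      simpa [Set.mem_prod] using hq
    obtain ⟨C₁, hC₁⟩ := hℓc.bounded_above_of_compact_support hcsℓ
    obtain ⟨C₂, hC₂⟩ := hℓ'c.bounded_above_of_compact_support hcsℓ'
    refine ⟨max 0 (max C₁ C₂), le_max_left _ _, fun y y' t => ?_, fun y y' t => ?_⟩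
    · exact le_trans (hC₁ (y, y', t)) (le_trans (le_max_left _ _) (le_max_right _ _))
    · exact le_trans (hC₂ (y, y', t)) (le_trans (le_max_right _ _) (le_max_right _ _))
  obtain ⟨Cb, hCb0, hCk, hCk'⟩ :
      ∃ C : ℝ, 0 ≤ C ∧ (∀ p r : Y × ℝ, ‖k p r‖ ≤ C) ∧ (∀ p r : Y × ℝ, ‖k' p r‖ ≤ C) := by
    obtain ⟨C₁, hC₁⟩ := hkg.exists_bound_of_continuousOn hkc.continuousOn
    obtain ⟨C₂, hC₂⟩ := hk'g.exists_bound_of_continuousOn hk'c.continuousOn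
    refine ⟨max Cℓ (max 0 (max C₁ C₂)), le_trans (le_max_left 0 _) (le_max_right _ _),
      fun p r => ?_, fun p r => ?_⟩
    · by_cases h : p.2 ≤ -l₀ ∧ r.2 ≤ -l₀
      · have he : k p r = ℓ p.1 r.1 (p.2 - r.2) := by
          have := hks p.1 p.2 r.1 r.2 h.1 h.2
          simpa using this
        rw [he]
        exact le_trans (hCℓ _ _ _) (le_max_left _ _)
      · by_cases hx : (p, r) ∈ tsupport
            (fun q : (Y × ℝ) × (Y × ℝ) => if q.1.2 ≤ -l₀ ∧ q.2.2 ≤ -l₀ then 0 else k q.1 q.2)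
        · exact le_trans (hC₁ (p, r) hx) (le_trans (le_max_left _ _)
            (le_trans (le_max_right _ _) (le_max_right _ _)))
        · have h0 := image_eq_zero_of_notMem_tsupport hx
          simp only [if_neg h] at h0
          rw [h0]
          simpa using le_trans (le_max_left (0:ℝ) (max C₁ C₂)) (le_max_right Cℓ _)
    · by_cases h : p.2 ≤ -l₁ ∧ r.2 ≤ -l₁
      · have he : k' p r = ℓ' p.1 r.1 (p.2 - r.2) := by
          have := hk's p.1 p.2 r.1 r.2 h.1 h.2
          simpa using this
        rw [he]
        exact le_trans (hCℓ' _ _ _) (le_max_left _ _)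
      · by_cases hx : (p, r) ∈ tsupport
            (fun q : (Y × ℝ) × (Y × ℝ) => if q.1.2 ≤ -l₁ ∧ q.2.2 ≤ -l₁ then 0 else k' q.1 q.2)
        · exact le_trans (hC₂ (p, r) hx) (le_trans (le_max_right _ _)
            (le_trans (le_max_right _ _) (le_max_right _ _)))
        · have h0 := image_eq_zero_of_notMem_tsupport hx
          simp only [if_neg h] at h0
          rw [h0]
          simpa using le_trans (le_max_left (0:ℝ) (max C₁ C₂)) (le_max_right Cℓ _)
  set Λ : ℝ := l₀ + l₁ + R + M + 1 with hΛdef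
  have hΛM : M < Λ := by simp only [hΛdef]; nlinarith
  have hΛ0 : 0 < Λ := by simp only [hΛdef]; nlinarith
  -- symbol representation of the kernels on the far region
  have hkL : ∀ p r : Y × ℝ, p.2 ≤ -Λ ∨ r.2 ≤ -Λ → k p r = ℓ p.1 r.1 (p.2 - r.2) := by
    rintro ⟨y, s⟩ ⟨y', s'⟩ h
    have hΛval : Λ = l₀ + l₁ + R + M + 1 := hΛdef
    rcases h with h | h
    · by_cases h' : s' ≤ -l₀
      · have := hks y s y' s' (by simp only at h; nlinarith) h'
        simpa using this
      · have h1 : k (y, s) (y', s') = 0 := by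
          refine hgz (y, s) (y', s') (fun hc => h' hc.2) ?_
          have h2 : M < -s := by simp only at h; nlinarith
          exact lt_max_of_lt_left (lt_of_lt_of_le h2 (neg_le_abs s))
        have h3 : ℓ y y' (s - s') = 0 := by
          refine hℓz y y' (s - s') ?_
          have h4 : R < -(s - s') := by
            simp only [not_le] at h'
            simp only at h
            nlinarith
          exact lt_of_lt_of_le h4 (neg_le_abs _)
        simpa [h3] using h1
    · by_cases h' : s ≤ -l₀
      · have := hks y s y' s' h' (by simp only at h; nlinarith)
        simpa using this
      · have h1 : k (y, s) (y', s') = 0 := by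
          refine hgz (y, s) (y', s') (fun hc => h' hc.1) ?_
          have h2 : M < -s' := by simp only at h; nlinarith
          exact lt_max_of_lt_right (lt_of_lt_of_le h2 (neg_le_abs s'))
        have h3 : ℓ y y' (s - s') = 0 := by
          refine hℓz y y' (s - s') ?_
          have h4 : R < s - s' := by
            simp only [not_le] at h'
            simp only at h
            nlinarith
          exact lt_of_lt_of_le h4 (le_abs_self _)
        simpa [h3] using h1
  have hk'L : ∀ p r : Y × ℝ, p.2 ≤ -Λ ∨ r.2 ≤ -Λ → k' p r = ℓ' p.1 r.1 (p.2 - r.2) := by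
    rintro ⟨y, s⟩ ⟨y', s'⟩ h
    rcases h with h | h
    · by_cases h' : s' ≤ -l₁
      · have := hk's y s y' s' (by simp only at h; nlinarith) h'
        simpa using this
      · have h1 : k' (y, s) (y', s') = 0 := by
          refine hg'z (y, s) (y', s') (fun hc => h' hc.2) ?_
          have h2 : M < -s := by simp only at h; nlinarith
          exact lt_max_of_lt_left (lt_of_lt_of_le h2 (neg_le_abs s))
        have h3 : ℓ' y y' (s - s') = 0 := by
          refine hℓ'z y y' (s - s') ?_
          have h4 : R < -(s - s') := by
            simp only [not_le] at h'
            simp only at h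
            nlinarith
          exact lt_of_lt_of_le h4 (neg_le_abs _)
        simpa [h3] using h1
    · by_cases h' : s ≤ -l₁
      · have := hk's y s y' s' h' (by simp only at h; nlinarith)
        simpa using this
      · have h1 : k' (y, s) (y', s') = 0 := by
          refine hg'z (y, s) (y', s') (fun hc => h' hc.1) ?_
          have h2 : M < -s' := by simp only at h; nlinarith
          exact lt_max_of_lt_right (lt_of_lt_of_le h2 (neg_le_abs s'))
        have h3 : ℓ' y y' (s - s') = 0 := by
          refine hℓ'z y y' (s - s') ?_
          have h4 : R < s - s' := by
            simp only [not_le] at h'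
            simp only at h
            nlinarith
          exact lt_of_lt_of_le h4 (le_abs_self _)
        simpa [h3] using h1
  -- support estimates
  have hksupp1 : ∀ p r : Y × ℝ, k p r ≠ 0 → |r.2| ≤ max M (|p.2| + R) := by
    intro p r hne
    by_cases h : p.2 ≤ -l₀ ∧ r.2 ≤ -l₀
    · have he : k p r = ℓ p.1 r.1 (p.2 - r.2) := by
        have := hks p.1 p.2 r.1 r.2 h.1 h.2
        simpa using this
      rw [he] at hne
      have hR' : |p.2 - r.2| ≤ R := by
        by_contra hcon
        exact hne (hℓz _ _ _ (not_le.1 hcon))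
      refine le_max_of_le_right ?_
      have h1 := abs_sub_abs_le_abs_sub r.2 p.2
      rw [abs_sub_comm r.2 p.2] at h1
      linarith
    · refine le_max_of_le_left ?_
      by_contra hcon
      exact hne (hgz p r h (lt_max_of_lt_right (not_le.1 hcon)))
  have hksupp2 : ∀ p r : Y × ℝ, k p r ≠ 0 → |p.2| ≤ max M (|r.2| + R) := by
    intro p r hne
    by_cases h : p.2 ≤ -l₀ ∧ r.2 ≤ -l₀
    · have he : k p r = ℓ p.1 r.1 (p.2 - r.2) := by
        have := hks p.1 p.2 r.1 r.2 h.1 h.2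
        simpa using this
      rw [he] at hne
      have hR' : |p.2 - r.2| ≤ R := by
        by_contra hcon
        exact hne (hℓz _ _ _ (not_le.1 hcon))
      refine le_max_of_le_right ?_
      have h1 := abs_sub_abs_le_abs_sub p.2 r.2
      linarith
    · refine le_max_of_le_left ?_
      by_contra hcon
      exact hne (hgz p r h (lt_max_of_lt_left (not_le.1 hcon)))
  have hk'supp1 : ∀ p r : Y × ℝ, k' p r ≠ 0 → |r.2| ≤ max M (|p.2| + R) := by
    intro p r hne
    by_cases h : p.2 ≤ -l₁ ∧ r.2 ≤ -l₁
    · have he : k' p r = ℓ' p.1 r.1 (p.2 - r.2) := by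
        have := hk's p.1 p.2 r.1 r.2 h.1 h.2
        simpa using this
      rw [he] at hne
      have hR' : |p.2 - r.2| ≤ R := by
        by_contra hcon
        exact hne (hℓ'z _ _ _ (not_le.1 hcon))
      refine le_max_of_le_right ?_
      have h1 := abs_sub_abs_le_abs_sub r.2 p.2
      rw [abs_sub_comm r.2 p.2] at h1
      linarith
    · refine le_max_of_le_left ?_
      by_contra hcon
      exact hne (hg'z p r h (lt_max_of_lt_right (not_le.1 hcon)))
  have hk'supp2 : ∀ p r : Y × ℝ, k' p r ≠ 0 → |p.2| ≤ max M (|r.2| + R) := by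
    intro p r hne
    by_cases h : p.2 ≤ -l₁ ∧ r.2 ≤ -l₁
    · have he : k' p r = ℓ' p.1 r.1 (p.2 - r.2) := by
        have := hk's p.1 p.2 r.1 r.2 h.1 h.2
        simpa using this
      rw [he] at hne
      have hR' : |p.2 - r.2| ≤ R := by
        by_contra hcon
        exact hne (hℓ'z _ _ _ (not_le.1 hcon))
      refine le_max_of_le_right ?_
      have h1 := abs_sub_abs_le_abs_sub p.2 r.2
      linarith
    · refine le_max_of_le_left ?_
      by_contra hcon
      exact hne (hg'z p r h (lt_max_of_lt_left (not_le.1 hcon)))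
  have hkpos : ∀ p r : Y × ℝ, M < p.2 ∨ M < r.2 → k p r = 0 := by
    intro p r h
    have hc : ¬(p.2 ≤ -l₀ ∧ r.2 ≤ -l₀) := by
      rcases h with h | h
      · intro hc
        have := hc.1
        nlinarith
      · intro hc
        have := hc.2
        nlinarith
    refine hgz p r hc ?_
    rcases h with h | h
    · exact lt_max_of_lt_left (lt_of_lt_of_le h (le_abs_self _))
    · exact lt_max_of_lt_right (lt_of_lt_of_le h (le_abs_self _))
  have hk'pos : ∀ p r : Y × ℝ, M < p.2 ∨ M < r.2 → k' p r = 0 := by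
    intro p r h
    have hc : ¬(p.2 ≤ -l₁ ∧ r.2 ≤ -l₁) := by
      rcases h with h | h
      · intro hc
        have := hc.1
        nlinarith
      · intro hc
        have := hc.2
        nlinarith
    refine hg'z p r hc ?_
    rcases h with h | h
    · exact lt_max_of_lt_left (lt_of_lt_of_le h (le_abs_self _))
    · exact lt_max_of_lt_right (lt_of_lt_of_le h (le_abs_self _))
  -- diagonal values of the composition far down
  have hconv1 : ∀ p : Y × ℝ, p.2 ≤ -Λ → kcomp μ k k' p p = conv μ ℓ ℓ' p.1 p.1 0 := by
    intro p hp
    have hmp : MeasurePreserving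
        (⇑((MeasurableEquiv.refl Y).prodCongr (Homeomorph.subLeft p.2).toMeasurableEquiv))
        (μ.prod volume) (μ.prod volume) :=
      (MeasurePreserving.id μ).prod (Measure.measurePreserving_sub_left volume p.2)
    have hcomp := hmp.integral_comp
      ((MeasurableEquiv.refl Y).prodCongr
        (Homeomorph.subLeft p.2).toMeasurableEquiv).measurableEmbedding
      (fun r : Y × ℝ => ℓ p.1 r.1 r.2 * ℓ' r.1 p.1 (0 - r.2))
    calc kcomp μ k k' p p
        = ∫ r : Y × ℝ, ℓ p.1 r.1 (p.2 - r.2) * ℓ' r.1 p.1 (r.2 - p.2) ∂(μ.prod volume) := by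
          refine integral_congr_ae (Eventually.of_forall fun r => ?_)
          show k p r * k' r p = _
          rw [hkL p r (Or.inl hp), hk'L r p (Or.inr hp)]
      _ = ∫ r : Y × ℝ, ℓ p.1 r.1 r.2 * ℓ' r.1 p.1 (0 - r.2) ∂(μ.prod volume) := by
          rw [← hcomp]
          refine integral_congr_ae (Eventually.of_forall fun r => ?_)
          show ℓ p.1 r.1 (p.2 - r.2) * ℓ' r.1 p.1 (r.2 - p.2) =
            ℓ p.1 r.1 (p.2 - r.2) * ℓ' r.1 p.1 (0 - (p.2 - r.2))
          rw [show (0:ℝ) - (p.2 - r.2) = r.2 - p.2 by ring]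
      _ = conv μ ℓ ℓ' p.1 p.1 0 := rfl
  have hconv2 : ∀ p : Y × ℝ, p.2 ≤ -Λ → kcomp μ k' k p p = conv μ ℓ' ℓ p.1 p.1 0 := by
    intro p hp
    have hmp : MeasurePreserving
        (⇑((MeasurableEquiv.refl Y).prodCongr (Homeomorph.subLeft p.2).toMeasurableEquiv))
        (μ.prod volume) (μ.prod volume) :=
      (MeasurePreserving.id μ).prod (Measure.measurePreserving_sub_left volume p.2)
    have hcomp := hmp.integral_comp
      ((MeasurableEquiv.refl Y).prodCongr
        (Homeomorph.subLeft p.2).toMeasurableEquiv).measurableEmbedding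
      (fun r : Y × ℝ => ℓ' p.1 r.1 r.2 * ℓ r.1 p.1 (0 - r.2))
    calc kcomp μ k' k p p
        = ∫ r : Y × ℝ, ℓ' p.1 r.1 (p.2 - r.2) * ℓ r.1 p.1 (r.2 - p.2) ∂(μ.prod volume) := by
          refine integral_congr_ae (Eventually.of_forall fun r => ?_)
          show k' p r * k r p = _
          rw [hk'L p r (Or.inl hp), hkL r p (Or.inr hp)]
      _ = ∫ r : Y × ℝ, ℓ' p.1 r.1 r.2 * ℓ r.1 p.1 (0 - r.2) ∂(μ.prod volume) := by
          rw [← hcomp]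
          refine integral_congr_ae (Eventually.of_forall fun r => ?_)
          show ℓ' p.1 r.1 (p.2 - r.2) * ℓ r.1 p.1 (r.2 - p.2) =
            ℓ' p.1 r.1 (p.2 - r.2) * ℓ r.1 p.1 (0 - (p.2 - r.2))
          rw [show (0:ℝ) - (p.2 - r.2) = r.2 - p.2 by ring]
      _ = conv μ ℓ' ℓ p.1 p.1 0 := rfl
  -- integrability of the convolution diagonal and vanishing of its integral
  have hΦc : Continuous (fun z : Y × Y × ℝ => ℓ z.1 z.2.1 z.2.2 * ℓ' z.2.1 z.1 (0 - z.2.2)) :=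
    hℓc.mul (hℓ'c.comp ((continuous_snd.fst).prodMk
      (continuous_fst.prodMk (continuous_const.sub continuous_snd.snd))))
  have hΦ'c : Continuous (fun z : Y × Y × ℝ => ℓ' z.1 z.2.1 z.2.2 * ℓ z.2.1 z.1 (0 - z.2.2)) :=
    hℓ'c.mul (hℓc.comp ((continuous_snd.fst).prodMk
      (continuous_fst.prodMk (continuous_const.sub continuous_snd.snd))))
  have hΦint : Integrable (fun z : Y × Y × ℝ => ℓ z.1 z.2.1 z.2.2 * ℓ' z.2.1 z.1 (0 - z.2.2))
      (μ.prod (μ.prod volume)) := by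
    refine integrable_of_bdd_support (C := Cℓ * Cℓ)
      (s := Set.univ ×ˢ Set.univ ×ˢ Set.Icc (-R) R) hΦc.aestronglyMeasurable
      (MeasurableSet.univ.prod (MeasurableSet.univ.prod measurableSet_Icc)) ?_ ?_ ?_
    · rw [Measure.prod_prod, Measure.prod_prod]
      exact ENNReal.mul_lt_top (measure_lt_top _ _) (ENNReal.mul_lt_top (measure_lt_top _ _)
        (by rw [Real.volume_Icc]; exact ENNReal.ofReal_lt_top))
    · intro z
      calc ‖ℓ z.1 z.2.1 z.2.2 * ℓ' z.2.1 z.1 (0 - z.2.2)‖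
          ≤ ‖ℓ z.1 z.2.1 z.2.2‖ * ‖ℓ' z.2.1 z.1 (0 - z.2.2)‖ := norm_mul_le _ _
        _ ≤ Cℓ * Cℓ := mul_le_mul (hCℓ _ _ _) (hCℓ' _ _ _) (norm_nonneg _) hCℓ0
    · intro z hz
      have h2 : z.2.2 ∉ Set.Icc (-R) R := by simpa [Set.mem_prod] using hz
      rw [hℓz _ _ _ ((habs _ _).1 h2), zero_mul]
  have hΦ'int : Integrable (fun z : Y × Y × ℝ => ℓ' z.1 z.2.1 z.2.2 * ℓ z.2.1 z.1 (0 - z.2.2))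
      (μ.prod (μ.prod volume)) := by
    refine integrable_of_bdd_support (C := Cℓ * Cℓ)
      (s := Set.univ ×ˢ Set.univ ×ˢ Set.Icc (-R) R) hΦ'c.aestronglyMeasurable
      (MeasurableSet.univ.prod (MeasurableSet.univ.prod measurableSet_Icc)) ?_ ?_ ?_
    · rw [Measure.prod_prod, Measure.prod_prod]
      exact ENNReal.mul_lt_top (measure_lt_top _ _) (ENNReal.mul_lt_top (measure_lt_top _ _)
        (by rw [Real.volume_Icc]; exact ENNReal.ofReal_lt_top))
    · intro z
      calc ‖ℓ' z.1 z.2.1 z.2.2 * ℓ z.2.1 z.1 (0 - z.2.2)‖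
          ≤ ‖ℓ' z.1 z.2.1 z.2.2‖ * ‖ℓ z.2.1 z.1 (0 - z.2.2)‖ := norm_mul_le _ _
        _ ≤ Cℓ * Cℓ := mul_le_mul (hCℓ' _ _ _) (hCℓ _ _ _) (norm_nonneg _) hCℓ0
    · intro z hz
      have h2 : z.2.2 ∉ Set.Icc (-R) R := by simpa [Set.mem_prod] using hz
      rw [hℓ'z _ _ _ ((habs _ _).1 h2), zero_mul]
  have hcc1 : Integrable (fun y => conv μ ℓ ℓ' y y 0) μ := hΦint.integral_prod_left
  have hcc2 : Integrable (fun y => conv μ ℓ' ℓ y y 0) μ := hΦ'int.integral_prod_left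
  have hccInt : Integrable (fun y => conv μ ℓ ℓ' y y 0 - conv μ ℓ' ℓ y y 0) μ := hcc1.sub hcc2
  have hCint : (∫ y, (conv μ ℓ ℓ' y y 0 - conv μ ℓ' ℓ y y 0) ∂μ) = 0 := by
    have h1 : (∫ y, conv μ ℓ ℓ' y y 0 ∂μ) =
        ∫ z : Y × Y × ℝ, ℓ z.1 z.2.1 z.2.2 * ℓ' z.2.1 z.1 (0 - z.2.2) ∂(μ.prod (μ.prod volume)) :=
      (integral_prod _ hΦint).symm
    have h2 : (∫ y, conv μ ℓ' ℓ y y 0 ∂μ) =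
        ∫ z : Y × Y × ℝ, ℓ' z.1 z.2.1 z.2.2 * ℓ z.2.1 z.1 (0 - z.2.2) ∂(μ.prod (μ.prod volume)) :=
      (integral_prod _ hΦ'int).symm
    have hEb : MeasurePreserving
        (⇑(MeasurableEquiv.prodAssoc.symm.trans
          ((MeasurableEquiv.prodComm.prodCongr (Homeomorph.neg ℝ).toMeasurableEquiv).trans
            MeasurableEquiv.prodAssoc) : Y × Y × ℝ ≃ᵐ Y × Y × ℝ))
        (μ.prod (μ.prod volume)) (μ.prod (μ.prod volume)) :=
      (measurePreserving_prodAssoc μ μ volume).comp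
        ((Measure.measurePreserving_swap.prod (Measure.measurePreserving_neg volume)).comp
          ((measurePreserving_prodAssoc μ μ volume).symm MeasurableEquiv.prodAssoc))
    have e2 := hEb.integral_comp (MeasurableEquiv.prodAssoc.symm.trans
          ((MeasurableEquiv.prodComm.prodCongr (Homeomorph.neg ℝ).toMeasurableEquiv).trans
            MeasurableEquiv.prodAssoc)).measurableEmbedding
      (fun z : Y × Y × ℝ => ℓ z.1 z.2.1 z.2.2 * ℓ' z.2.1 z.1 (0 - z.2.2))
    rw [integral_sub hcc1 hcc2, h1, h2, ← e2]
    have e3 : ∀ z : Y × Y × ℝ,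
        (fun z : Y × Y × ℝ => ℓ z.1 z.2.1 z.2.2 * ℓ' z.2.1 z.1 (0 - z.2.2))
          ((MeasurableEquiv.prodAssoc.symm.trans
            ((MeasurableEquiv.prodComm.prodCongr (Homeomorph.neg ℝ).toMeasurableEquiv).trans
              MeasurableEquiv.prodAssoc)) z) =
        ℓ' z.1 z.2.1 z.2.2 * ℓ z.2.1 z.1 (0 - z.2.2) := by
      intro z
      show ℓ z.2.1 z.1 (-z.2.2) * ℓ' z.1 z.2.1 (0 - -z.2.2) = _
      rw [show (0:ℝ) - -z.2.2 = z.2.2 by ring, show (-z.2.2 : ℝ) = 0 - z.2.2 by ring, mul_comm]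
    rw [integral_congr_ae (Eventually.of_forall e3), sub_self]
  -- pointwise integrability of the fibrewise products
  have hIone : ∀ p : Y × ℝ, Integrable (fun r : Y × ℝ => k p r * k' r p) (μ.prod volume) := by
    intro p
    refine integrable_of_bdd_support (C := Cb * Cb)
      (s := (Set.univ : Set Y) ×ˢ Set.Icc (-(max M (|p.2| + R))) (max M (|p.2| + R)))
      ?_ (MeasurableSet.univ.prod measurableSet_Icc) ?_ ?_ ?_
    · exact ((hkc.comp (continuous_const.prodMk continuous_id)).mul
        (hk'c.comp (continuous_id.prodMk continuous_const))).aestronglyMeasurable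
    · rw [Measure.prod_prod]
      exact ENNReal.mul_lt_top (measure_lt_top _ _)
        (by rw [Real.volume_Icc]; exact ENNReal.ofReal_lt_top)
    · intro r
      calc ‖k p r * k' r p‖ ≤ ‖k p r‖ * ‖k' r p‖ := norm_mul_le _ _
        _ ≤ Cb * Cb := mul_le_mul (hCk _ _) (hCk' _ _) (norm_nonneg _) hCb0
    · intro r hr
      have h1 : r.2 ∉ Set.Icc (-(max M (|p.2| + R))) (max M (|p.2| + R)) := by
        simpa [Set.mem_prod] using hr
      have h2 : k p r = 0 := by
        by_contra hne
        exact absurd (hksupp1 p r hne) (not_le.2 ((habs _ _).1 h1))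
      rw [h2, zero_mul]
  have hIone' : ∀ p : Y × ℝ, Integrable (fun r : Y × ℝ => k r p * k' p r) (μ.prod volume) := by
    intro p
    refine integrable_of_bdd_support (C := Cb * Cb)
      (s := (Set.univ : Set Y) ×ˢ Set.Icc (-(max M (|p.2| + R))) (max M (|p.2| + R)))
      ?_ (MeasurableSet.univ.prod measurableSet_Icc) ?_ ?_ ?_
    · exact ((hkc.comp (continuous_id.prodMk continuous_const)).mul
        (hk'c.comp (continuous_const.prodMk continuous_id))).aestronglyMeasurable
    · rw [Measure.prod_prod]
      exact ENNReal.mul_lt_top (measure_lt_top _ _)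
        (by rw [Real.volume_Icc]; exact ENNReal.ofReal_lt_top)
    · intro r
      calc ‖k r p * k' p r‖ ≤ ‖k r p‖ * ‖k' p r‖ := norm_mul_le _ _
        _ ≤ Cb * Cb := mul_le_mul (hCk _ _) (hCk' _ _) (norm_nonneg _) hCb0
    · intro r hr
      have h1 : r.2 ∉ Set.Icc (-(max M (|p.2| + R))) (max M (|p.2| + R)) := by
        simpa [Set.mem_prod] using hr
      have h2 : k' p r = 0 := by
        by_contra hne
        exact absurd (hk'supp1 p r hne) (not_le.2 ((habs _ _).1 h1))
      rw [h2, mul_zero]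
  -- joint integrability
  have hJ1 : Integrable (fun q : (Y × ℝ) × (Y × ℝ) =>
      (if -Λ ≤ q.1.2 then (1 : ℂ) else 0) * (k q.1 q.2 * k' q.2 q.1))
      ((μ.prod volume).prod (μ.prod volume)) := by
    refine integrable_of_bdd_support (C := Cb * Cb)
      (s := ((Set.univ : Set Y) ×ˢ Set.Icc (-Λ) M) ×ˢ
        ((Set.univ : Set Y) ×ˢ Set.Icc (-(max M (max Λ M + R))) (max M (max Λ M + R))))
      ?_ ((MeasurableSet.univ.prod measurableSet_Icc).prod
        (MeasurableSet.univ.prod measurableSet_Icc)) ?_ ?_ ?_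
    · exact ((Measurable.ite (measurableSet_le measurable_const measurable_fst.snd)
        measurable_const measurable_const).mul
        ((hkc.mul (hk'c.comp continuous_swap)).measurable)).aestronglyMeasurable
    · rw [Measure.prod_prod, Measure.prod_prod, Measure.prod_prod]
      exact ENNReal.mul_lt_top
        (ENNReal.mul_lt_top (measure_lt_top _ _)
          (by rw [Real.volume_Icc]; exact ENNReal.ofReal_lt_top))
        (ENNReal.mul_lt_top (measure_lt_top _ _)
          (by rw [Real.volume_Icc]; exact ENNReal.ofReal_lt_top))
    · intro q
      have h1 : ‖(if -Λ ≤ q.1.2 then (1:ℂ) else 0)‖ ≤ 1 := by split <;> simp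
      calc ‖(if -Λ ≤ q.1.2 then (1:ℂ) else 0) * (k q.1 q.2 * k' q.2 q.1)‖
          ≤ ‖(if -Λ ≤ q.1.2 then (1:ℂ) else 0)‖ * ‖k q.1 q.2 * k' q.2 q.1‖ := norm_mul_le _ _
        _ ≤ 1 * (Cb * Cb) := mul_le_mul h1 (le_trans (norm_mul_le _ _)
            (mul_le_mul (hCk _ _) (hCk' _ _) (norm_nonneg _) hCb0)) (norm_nonneg _) one_pos.le
        _ = Cb * Cb := one_mul _
    · intro q hq
      by_cases h1 : -Λ ≤ q.1.2
      · by_cases h2 : q.1.2 ≤ M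
        · have h3 : q.2.2 ∉ Set.Icc (-(max M (max Λ M + R))) (max M (max Λ M + R)) := by
            by_contra h3
            exact hq ⟨⟨trivial, ⟨h1, h2⟩⟩, ⟨trivial, h3⟩⟩
          have h4 : k q.1 q.2 = 0 := by
            by_contra hne
            have h5 := hksupp1 q.1 q.2 hne
            have h6 : |q.1.2| ≤ max Λ M :=
              abs_le.2 ⟨le_trans (neg_le_neg (le_max_left _ _)) h1,
                le_trans h2 (le_max_right _ _)⟩
            have h7 : |q.2.2| ≤ max M (max Λ M + R) :=
              le_trans h5 (max_le_max le_rfl (by linarith))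
            exact h3 (Set.mem_Icc.2 (abs_le.1 h7))
          rw [h4, zero_mul, mul_zero]
        · rw [hkpos q.1 q.2 (Or.inl (not_le.1 h2)), zero_mul, mul_zero]
      · rw [if_neg h1, zero_mul]
  have hJ2 : Integrable (fun q : (Y × ℝ) × (Y × ℝ) =>
      (if -Λ ≤ q.1.2 then (1 : ℂ) else 0) * (k q.2 q.1 * k' q.1 q.2))
      ((μ.prod volume).prod (μ.prod volume)) := by
    refine integrable_of_bdd_support (C := Cb * Cb)
      (s := ((Set.univ : Set Y) ×ˢ Set.Icc (-Λ) M) ×ˢ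
        ((Set.univ : Set Y) ×ˢ Set.Icc (-(max M (max Λ M + R))) (max M (max Λ M + R))))
      ?_ ((MeasurableSet.univ.prod measurableSet_Icc).prod
        (MeasurableSet.univ.prod measurableSet_Icc)) ?_ ?_ ?_
    · exact ((Measurable.ite (measurableSet_le measurable_const measurable_fst.snd)
        measurable_const measurable_const).mul
        (((hkc.comp continuous_swap).mul hk'c).measurable)).aestronglyMeasurable
    · rw [Measure.prod_prod, Measure.prod_prod, Measure.prod_prod]
      exact ENNReal.mul_lt_top
        (ENNReal.mul_lt_top (measure_lt_top _ _)
          (by rw [Real.volume_Icc]; exact ENNReal.ofReal_lt_top))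
        (ENNReal.mul_lt_top (measure_lt_top _ _)
          (by rw [Real.volume_Icc]; exact ENNReal.ofReal_lt_top))
    · intro q
      have h1 : ‖(if -Λ ≤ q.1.2 then (1:ℂ) else 0)‖ ≤ 1 := by split <;> simp
      calc ‖(if -Λ ≤ q.1.2 then (1:ℂ) else 0) * (k q.2 q.1 * k' q.1 q.2)‖
          ≤ ‖(if -Λ ≤ q.1.2 then (1:ℂ) else 0)‖ * ‖k q.2 q.1 * k' q.1 q.2‖ := norm_mul_le _ _
        _ ≤ 1 * (Cb * Cb) := mul_le_mul h1 (le_trans (norm_mul_le _ _)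
            (mul_le_mul (hCk _ _) (hCk' _ _) (norm_nonneg _) hCb0)) (norm_nonneg _) one_pos.le
        _ = Cb * Cb := one_mul _
    · intro q hq
      by_cases h1 : -Λ ≤ q.1.2
      · by_cases h2 : q.1.2 ≤ M
        · have h3 : q.2.2 ∉ Set.Icc (-(max M (max Λ M + R))) (max M (max Λ M + R)) := by
            by_contra h3
            exact hq ⟨⟨trivial, ⟨h1, h2⟩⟩, ⟨trivial, h3⟩⟩
          have h4 : k q.2 q.1 = 0 := by
            by_contra hne
            have h5 := hksupp2 q.2 q.1 hne
            have h6 : |q.1.2| ≤ max Λ M :=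
              abs_le.2 ⟨le_trans (neg_le_neg (le_max_left _ _)) h1,
                le_trans h2 (le_max_right _ _)⟩
            have h7 : |q.2.2| ≤ max M (max Λ M + R) :=
              le_trans h5 (max_le_max le_rfl (by linarith))
            exact h3 (Set.mem_Icc.2 (abs_le.1 h7))
          rw [h4, zero_mul, mul_zero]
        · rw [hk'pos q.1 q.2 (Or.inl (not_le.1 h2)), mul_zero, mul_zero]
      · rw [if_neg h1, zero_mul]
  have hJ2' : Integrable (fun q : (Y × ℝ) × (Y × ℝ) =>
      (if -Λ ≤ q.2.2 then (1 : ℂ) else 0) * (k q.1 q.2 * k' q.2 q.1))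
      ((μ.prod volume).prod (μ.prod volume)) := by
    refine integrable_of_bdd_support (C := Cb * Cb)
      (s := ((Set.univ : Set Y) ×ˢ Set.Icc (-(max M (max Λ M + R))) (max M (max Λ M + R))) ×ˢ
        ((Set.univ : Set Y) ×ˢ Set.Icc (-Λ) M))
      ?_ ((MeasurableSet.univ.prod measurableSet_Icc).prod
        (MeasurableSet.univ.prod measurableSet_Icc)) ?_ ?_ ?_
    · exact ((Measurable.ite (measurableSet_le measurable_const measurable_snd.snd)
        measurable_const measurable_const).mul
        ((hkc.mul (hk'c.comp continuous_swap)).measurable)).aestronglyMeasurable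
    · rw [Measure.prod_prod, Measure.prod_prod, Measure.prod_prod]
      exact ENNReal.mul_lt_top
        (ENNReal.mul_lt_top (measure_lt_top _ _)
          (by rw [Real.volume_Icc]; exact ENNReal.ofReal_lt_top))
        (ENNReal.mul_lt_top (measure_lt_top _ _)
          (by rw [Real.volume_Icc]; exact ENNReal.ofReal_lt_top))
    · intro q
      have h1 : ‖(if -Λ ≤ q.2.2 then (1:ℂ) else 0)‖ ≤ 1 := by split <;> simp
      calc ‖(if -Λ ≤ q.2.2 then (1:ℂ) else 0) * (k q.1 q.2 * k' q.2 q.1)‖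
          ≤ ‖(if -Λ ≤ q.2.2 then (1:ℂ) else 0)‖ * ‖k q.1 q.2 * k' q.2 q.1‖ := norm_mul_le _ _
        _ ≤ 1 * (Cb * Cb) := mul_le_mul h1 (le_trans (norm_mul_le _ _)
            (mul_le_mul (hCk _ _) (hCk' _ _) (norm_nonneg _) hCb0)) (norm_nonneg _) one_pos.le
        _ = Cb * Cb := one_mul _
    · intro q hq
      by_cases h1 : -Λ ≤ q.2.2
      · by_cases h2 : q.2.2 ≤ M
        · have h3 : q.1.2 ∉ Set.Icc (-(max M (max Λ M + R))) (max M (max Λ M + R)) := by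
            by_contra h3
            exact hq ⟨⟨trivial, h3⟩, ⟨trivial, ⟨h1, h2⟩⟩⟩
          have h4 : k q.1 q.2 = 0 := by
            by_contra hne
            have h5 := hksupp2 q.1 q.2 hne
            have h6 : |q.2.2| ≤ max Λ M :=
              abs_le.2 ⟨le_trans (neg_le_neg (le_max_left _ _)) h1,
                le_trans h2 (le_max_right _ _)⟩
            have h7 : |q.1.2| ≤ max M (max Λ M + R) :=
              le_trans h5 (max_le_max le_rfl (by linarith))
            exact h3 (Set.mem_Icc.2 (abs_le.1 h7))
          rw [h4, zero_mul, mul_zero]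
        · rw [hk'pos q.2 q.1 (Or.inl (not_le.1 h2)), mul_zero, mul_zero]
      · rw [if_neg h1, zero_mul]
  have hJ : Integrable (fun q : (Y × ℝ) × (Y × ℝ) =>
      (if -Λ ≤ q.1.2 then (1 : ℂ) else 0) *
        (k q.1 q.2 * k' q.2 q.1 - k q.2 q.1 * k' q.1 q.2))
      ((μ.prod volume).prod (μ.prod volume)) := by
    refine (hJ1.sub hJ2).congr (Eventually.of_forall fun q => ?_)
    simp only [Pi.sub_apply]
    ring
  -- representation of the truncated diagonal of the commutator
  have hFrep : ∀ p : Y × ℝ,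
      (if -Λ ≤ p.2 then (kcomp μ k k' p p - kcomp μ k' k p p) else 0) =
        ∫ r : Y × ℝ, (if -Λ ≤ p.2 then (1 : ℂ) else 0) *
          (k p r * k' r p - k r p * k' p r) ∂(μ.prod volume) := by
    intro p
    by_cases h : -Λ ≤ p.2
    · rw [if_pos h]
      symm
      calc (∫ r : Y × ℝ, (if -Λ ≤ p.2 then (1:ℂ) else 0) *
            (k p r * k' r p - k r p * k' p r) ∂(μ.prod volume))
          = ∫ r : Y × ℝ, (k p r * k' r p - k r p * k' p r) ∂(μ.prod volume) := by
            simp only [if_pos h, one_mul]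
        _ = (∫ r : Y × ℝ, k p r * k' r p ∂(μ.prod volume)) -
            ∫ r : Y × ℝ, k r p * k' p r ∂(μ.prod volume) := integral_sub (hIone p) (hIone' p)
        _ = kcomp μ k k' p p - kcomp μ k' k p p := by
            have h2 : kcomp μ k' k p p = ∫ r : Y × ℝ, k r p * k' p r ∂(μ.prod volume) :=
              integral_congr_ae (Eventually.of_forall fun r => mul_comm _ _)
            rw [h2]
            rfl
    · rw [if_neg h]
      symm
      simp only [if_neg h, zero_mul, integral_zero]
  have hint1 : Integrable (fun p : Y × ℝ =>
      if -Λ ≤ p.2 then (kcomp μ k k' p p - kcomp μ k' k p p) else 0) (μ.prod volume) := by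
    refine hJ.integral_prod_left.congr (Eventually.of_forall fun p => ?_)
    exact (hFrep p).symm
  -- the main computation
  have hmain : (∫ p : Y × ℝ,
      (if -Λ ≤ p.2 then (kcomp μ k k' p p - kcomp μ k' k p p) else 0) ∂(μ.prod volume)) =
      sigma1 μ ℓ ℓ' := by
    calc (∫ p : Y × ℝ,
        (if -Λ ≤ p.2 then (kcomp μ k k' p p - kcomp μ k' k p p) else 0) ∂(μ.prod volume))
        = ∫ p : Y × ℝ, (∫ r : Y × ℝ, (if -Λ ≤ p.2 then (1 : ℂ) else 0) *
            (k p r * k' r p - k r p * k' p r) ∂(μ.prod volume)) ∂(μ.prod volume) :=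
          integral_congr_ae (Eventually.of_forall hFrep)
      _ = ∫ q : (Y × ℝ) × (Y × ℝ), (if -Λ ≤ q.1.2 then (1 : ℂ) else 0) *
            (k q.1 q.2 * k' q.2 q.1 - k q.2 q.1 * k' q.1 q.2)
            ∂((μ.prod volume).prod (μ.prod volume)) := (integral_prod _ hJ).symm
      _ = (∫ q : (Y × ℝ) × (Y × ℝ), (if -Λ ≤ q.1.2 then (1 : ℂ) else 0) *
            (k q.1 q.2 * k' q.2 q.1) ∂((μ.prod volume).prod (μ.prod volume))) -
          (∫ q : (Y × ℝ) × (Y × ℝ), (if -Λ ≤ q.1.2 then (1 : ℂ) else 0) *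
            (k q.2 q.1 * k' q.1 q.2) ∂((μ.prod volume).prod (μ.prod volume))) := by
          rw [← integral_sub hJ1 hJ2]
          refine integral_congr_ae (Eventually.of_forall fun q => ?_)
          ring
      _ = (∫ q : (Y × ℝ) × (Y × ℝ), (if -Λ ≤ q.1.2 then (1 : ℂ) else 0) *
            (k q.1 q.2 * k' q.2 q.1) ∂((μ.prod volume).prod (μ.prod volume))) -
          (∫ q : (Y × ℝ) × (Y × ℝ), (if -Λ ≤ q.2.2 then (1 : ℂ) else 0) *
            (k q.1 q.2 * k' q.2 q.1) ∂((μ.prod volume).prod (μ.prod volume))) := by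
          congr 1
          have hsw := Measure.measurePreserving_swap
            (μ := μ.prod (volume : Measure ℝ)) (ν := μ.prod (volume : Measure ℝ))
          have hcs := hsw.integral_comp MeasurableEquiv.prodComm.measurableEmbedding
            (fun q : (Y × ℝ) × (Y × ℝ) => (if -Λ ≤ q.2.2 then (1 : ℂ) else 0) *
              (k q.1 q.2 * k' q.2 q.1))
          rw [← hcs]
          rfl
      _ = ∫ q : (Y × ℝ) × (Y × ℝ),
            ((if -Λ ≤ q.1.2 then (1 : ℂ) else 0) - (if -Λ ≤ q.2.2 then (1 : ℂ) else 0)) *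
            (k q.1 q.2 * k' q.2 q.1) ∂((μ.prod volume).prod (μ.prod volume)) := by
          rw [← integral_sub hJ1 hJ2']
          refine integral_congr_ae (Eventually.of_forall fun q => ?_)
          ring
      _ = ∫ q : (Y × ℝ) × (Y × ℝ),
            ((if -Λ ≤ q.1.2 then (1 : ℂ) else 0) - (if -Λ ≤ q.2.2 then (1 : ℂ) else 0)) *
            (ℓ q.1.1 q.2.1 (q.1.2 - q.2.2) * ℓ' q.2.1 q.1.1 (q.2.2 - q.1.2))
            ∂((μ.prod volume).prod (μ.prod volume)) := by
          refine integral_congr_ae (Eventually.of_forall fun q => ?_)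
          dsimp only
          by_cases h1 : -Λ ≤ q.1.2 <;> by_cases h2 : -Λ ≤ q.2.2
          · rw [if_pos h1, if_pos h2, sub_self, zero_mul, zero_mul]
          · have hd : q.2.2 ≤ -Λ := le_of_lt (not_le.1 h2)
            rw [hkL q.1 q.2 (Or.inr hd), hk'L q.2 q.1 (Or.inl hd)]
          · have hd : q.1.2 ≤ -Λ := le_of_lt (not_le.1 h1)
            rw [hkL q.1 q.2 (Or.inl hd), hk'L q.2 q.1 (Or.inr hd)]
          · rw [if_neg h1, if_neg h2, sub_self, zero_mul, zero_mul]
      _ = ∫ q : (Y × ℝ) × (Y × ℝ),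
            (ℓ q.1.1 q.2.1 (q.1.2 - q.2.2) * ℓ' q.2.1 q.1.1 (q.2.2 - q.1.2)) *
            (chi Λ q.2.2 - chi Λ q.1.2) ∂((μ.prod volume).prod (μ.prod volume)) := by
          have hnull1 : (μ.prod (volume : Measure ℝ)) ((Set.univ : Set Y) ×ˢ ({-Λ} : Set ℝ)) = 0 := by
            rw [Measure.prod_prod, Real.volume_singleton, mul_zero]
          have hnullA : ((μ.prod volume).prod (μ.prod volume))
              {q : (Y × ℝ) × (Y × ℝ) | q.1.2 = -Λ} = 0 := by
            refine measure_mono_null (t := ((Set.univ : Set Y) ×ˢ ({-Λ} : Set ℝ)) ×ˢ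
              (Set.univ : Set (Y × ℝ))) (fun q hq => ⟨⟨trivial, hq⟩, trivial⟩) ?_
            rw [Measure.prod_prod, hnull1, zero_mul]
          have hnullB : ((μ.prod volume).prod (μ.prod volume))
              {q : (Y × ℝ) × (Y × ℝ) | q.2.2 = -Λ} = 0 := by
            refine measure_mono_null (t := (Set.univ : Set (Y × ℝ)) ×ˢ
              ((Set.univ : Set Y) ×ˢ ({-Λ} : Set ℝ))) (fun q hq => ⟨trivial, ⟨trivial, hq⟩⟩) ?_
            rw [Measure.prod_prod, hnull1, mul_zero]
          have hae1 : ∀ᵐ q : (Y × ℝ) × (Y × ℝ) ∂((μ.prod volume).prod (μ.prod volume)),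
              q.1.2 ≠ (-Λ : ℝ) := by
            rw [ae_iff]
            simpa using hnullA
          have hae2 : ∀ᵐ q : (Y × ℝ) × (Y × ℝ) ∂((μ.prod volume).prod (μ.prod volume)),
              q.2.2 ≠ (-Λ : ℝ) := by
            rw [ae_iff]
            simpa using hnullB
          refine integral_congr_ae ?_
          filter_upwards [hae1, hae2] with q hq1 hq2
          have e1 : (if -Λ ≤ q.1.2 then (1:ℂ) else 0) = 1 - chi Λ q.1.2 := by
            rcases lt_or_gt_of_ne hq1 with h | h
            · rw [if_neg (not_le.2 h), chi, if_pos (le_of_lt h)]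
              ring
            · rw [if_pos (le_of_lt h), chi, if_neg (not_le.2 h)]
              ring
          have e2 : (if -Λ ≤ q.2.2 then (1:ℂ) else 0) = 1 - chi Λ q.2.2 := by
            rcases lt_or_gt_of_ne hq2 with h | h
            · rw [if_neg (not_le.2 h), chi, if_pos (le_of_lt h)]
              ring
            · rw [if_pos (le_of_lt h), chi, if_neg (not_le.2 h)]
              ring
          rw [e1, e2]
          ring
      _ = ∫ w : (Y × Y) × ℝ × ℝ,
            (ℓ w.1.1 w.1.2 (w.2.1 - w.2.2) * ℓ' w.1.2 w.1.1 (w.2.2 - w.2.1)) *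
            (chi Λ w.2.2 - chi Λ w.2.1) ∂((μ.prod μ).prod (volume.prod volume)) := by
          have hmp := measurePreserving_prodProdProdCommME μ (volume : Measure ℝ) μ
            (volume : Measure ℝ)
          have hcmp := hmp.integral_comp prodProdProdCommME.measurableEmbedding
            (fun w : (Y × Y) × ℝ × ℝ =>
              (ℓ w.1.1 w.1.2 (w.2.1 - w.2.2) * ℓ' w.1.2 w.1.1 (w.2.2 - w.2.1)) *
              (chi Λ w.2.2 - chi Λ w.2.1))
          rw [← hcmp]
          rfl
      _ = sigma1 μ ℓ ℓ' := by
          have hmpt : MeasurePreserving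
              (⇑((MeasurableEquiv.refl (Y × Y)).prodCongr
                (((Homeomorph.subRight Λ).toMeasurableEquiv).prodCongr
                  ((Homeomorph.subRight Λ).toMeasurableEquiv))))
              ((μ.prod μ).prod ((volume : Measure ℝ).prod volume))
              ((μ.prod μ).prod ((volume : Measure ℝ).prod volume)) :=
            (MeasurePreserving.id (μ.prod μ)).prod
              ((measurePreserving_sub_right volume Λ).prod
                (measurePreserving_sub_right volume Λ))
          have hct := hmpt.integral_comp ((MeasurableEquiv.refl (Y × Y)).prodCongr
                (((Homeomorph.subRight Λ).toMeasurableEquiv).prodCongr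
                  ((Homeomorph.subRight Λ).toMeasurableEquiv))).measurableEmbedding
            (fun w : (Y × Y) × ℝ × ℝ =>
              (ℓ w.1.1 w.1.2 (w.2.1 - w.2.2) * ℓ' w.1.2 w.1.1 (w.2.2 - w.2.1)) *
              (chi Λ w.2.2 - chi Λ w.2.1))
          rw [← hct, sigma1]
          refine integral_congr_ae (Eventually.of_forall fun w => ?_)
          show (ℓ w.1.1 w.1.2 ((w.2.1 - Λ) - (w.2.2 - Λ)) *
              ℓ' w.1.2 w.1.1 ((w.2.2 - Λ) - (w.2.1 - Λ))) *
              (chi Λ (w.2.2 - Λ) - chi Λ (w.2.1 - Λ)) = _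
          rw [sub_sub_sub_cancel_right, sub_sub_sub_cancel_right, chi_shift, chi_shift]
  -- conclusion
  refine Tendsto.congr' ?_ tendsto_const_nhds
  filter_upwards [eventually_ge_atTop Λ] with b hb
  have hsplit : ∀ p : Y × ℝ,
      (if -b ≤ p.2 then (kcomp μ k k' p p - kcomp μ k' k p p) else 0) =
        (if -Λ ≤ p.2 then (kcomp μ k k' p p - kcomp μ k' k p p) else 0) +
          (conv μ ℓ ℓ' p.1 p.1 0 - conv μ ℓ' ℓ p.1 p.1 0) *
            (if p.2 ∈ Set.Ico (-b) (-Λ) then (1 : ℂ) else 0) := by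
    intro p
    by_cases h1 : -Λ ≤ p.2
    · have h2 : -b ≤ p.2 := le_trans (neg_le_neg hb) h1
      have h3 : p.2 ∉ Set.Ico (-b) (-Λ) := fun hIco => (not_lt.2 h1) hIco.2
      rw [if_pos h2, if_pos h1, if_neg h3, mul_zero, add_zero]
    · have hle : p.2 ≤ -Λ := le_of_lt (not_le.1 h1)
      by_cases h2 : -b ≤ p.2
      · have hIco : p.2 ∈ Set.Ico (-b) (-Λ) := ⟨h2, not_le.1 h1⟩
        rw [if_pos h2, if_neg h1, if_pos hIco, mul_one, zero_add,
          hconv1 p hle, hconv2 p hle]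
      · have h3 : p.2 ∉ Set.Ico (-b) (-Λ) := fun hIco => h2 hIco.1
        rw [if_neg h2, if_neg h1, if_neg h3, mul_zero, add_zero]
  have hstripInt : Integrable (fun z : Y × ℝ =>
      (conv μ ℓ ℓ' z.1 z.1 0 - conv μ ℓ' ℓ z.1 z.1 0) *
        (if z.2 ∈ Set.Ico (-b) (-Λ) then (1 : ℂ) else 0)) (μ.prod volume) := by
    have hind : Integrable (fun s : ℝ => if s ∈ Set.Ico (-b) (-Λ) then (1 : ℂ) else 0) volume := by
      refine integrable_of_bdd_support (C := 1) (s := Set.Ico (-b) (-Λ)) ?_ measurableSet_Ico ?_ ?_ ?_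
      · exact ((Measurable.ite measurableSet_Ico measurable_const
          measurable_const).stronglyMeasurable).aestronglyMeasurable
      · rw [Real.volume_Ico]
        exact ENNReal.ofReal_lt_top
      · intro x
        split <;> simp
      · intro x hx
        rw [if_neg hx]
    exact hccInt.mul_prod hind
  show sigma1 μ ℓ ℓ' = _
  rw [phiReg]
  rw [hCint, mul_zero, sub_zero]
  rw [integral_congr_ae (Eventually.of_forall hsplit),
    integral_add hint1 hstripInt, hmain]
  rw [integral_prod_mul (μ := μ) (ν := (volume : Measure ℝ))
    (f := fun y => conv μ ℓ ℓ' y y 0 - conv μ ℓ' ℓ y y 0)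
    (g := fun s => if s ∈ Set.Ico (-b) (-Λ) then (1 : ℂ) else 0), hCint, zero_mul, add_zero]

end
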